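/- Let α > 0, β ∈ ℂ, and let 𝔛, Λ, ΛH, K_𝔛, K^{≥0}_𝔛, π^H be as in the ℓ¹-model of the loop algebra. Then for every H ∈ K_𝔛 ∩ ΛH there exists P ∈ K^{≥0}_𝔛 such that the zeroth coefficient P₀ preserves the line ℂ·e₁ (i.e. the (2,1)-entry of P₀ vanishes) and π^H(P) = H. -/

import Mathlib

open Complex ComplexConjugate Matrix

noncomputable section

attribute [local instance] Matrix.normedAddCommGroup

/-- Membership in the ℓ¹-model `Λ` of the Wiener loop algebra `Λsl(2,ℂ)`:
absolutely summable coefficients, all traceless. -/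
def memL (ξ : ℤ → Matrix (Fin 2) (Fin 2) ℂ) : Prop :=
  Summable (fun k => ‖ξ k‖) ∧ ∀ k, (ξ k).trace = 0

/-- The coefficientwise involution `(ξ*)_k = −(−1)^k·(ξ_{−k})ᴴ`. -/
def starSeq (ξ : ℤ → Matrix (Fin 2) (Fin 2) ℂ) : ℤ → Matrix (Fin 2) (Fin 2) ℂ :=
  fun k => -((-1 : ℂ) ^ k • (ξ (-k))ᴴ)

/-- The projection `π^H(ξ) = ½(ξ − ξ*)` onto the Hermitian-symmetric part. -/
def piH (ξ : ℤ → Matrix (Fin 2) (Fin 2) ℂ) : ℤ → Matrix (Fin 2) (Fin 2) ℂ :=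
  fun k => (1 / 2 : ℂ) • (ξ k - starSeq ξ k)

/-- The loop `𝔛` with coefficients `𝔛₋₁ = β·E₁₂`, `𝔛₀ = diag(μ,−μ)` (`μ = i√(α²+|β|²)`),
`𝔛₁ = conj(β)·E₂₁`, and `𝔛_k = 0` otherwise. -/
def XX (α : ℝ) (β : ℂ) : ℤ → Matrix (Fin 2) (Fin 2) ℂ := fun k =>
  if k = -1 then β • !![0, 1; 0, 0]
  else if k = 0 then
    !![Complex.I * ((Real.sqrt (α ^ 2 + Complex.normSq β) : ℝ) : ℂ), 0;
       0, -(Complex.I * ((Real.sqrt (α ^ 2 + Complex.normSq β) : ℝ) : ℂ))]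
  else if k = 1 then (conj β) • !![0, 0; 1, 0]
  else 0

/-- The condition `tr(𝔛ξ) = 0`, coefficient by coefficient. -/
def Kcond (α : ℝ) (β : ℂ) (ξ : ℤ → Matrix (Fin 2) (Fin 2) ℂ) : Prop :=
  ∀ k : ℤ, (XX α β (-1) * ξ (k + 1)).trace + (XX α β 0 * ξ k).trace
      + (XX α β 1 * ξ (k - 1)).trace = 0

/-- For every `H ∈ K_𝔛 ∩ ΛH` there exists `P ∈ K^{≥0}_𝔛` whose zeroth coefficient
preserves the line `ℂ·e₁` (its `(2,1)`-entry vanishes) and with `π^H(P) = H`. -/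
theorem stmt14 (α : ℝ) (hα : 0 < α) (β : ℂ) :
    ∀ H, memL H → Kcond α β H → (∀ k, starSeq H k = -H k) →
      ∃ P, memL P ∧ Kcond α β P ∧ (∀ k < 0, P k = 0) ∧
        P 0 1 0 = 0 ∧ piH P = H := by
  intro H hH hK hstar
  set r : ℝ := Real.sqrt (α ^ 2 + Complex.normSq β) with hrdef
  have hr : 0 < r := Real.sqrt_pos.mpr (by nlinarith [Complex.normSq_nonneg β, pow_pos hα 2])
  have hrC : (r : ℂ) ≠ 0 := by exact_mod_cast hr.ne'
  -- trace formula
  have trform : ∀ (ξ : ℤ → Matrix (Fin 2) (Fin 2) ℂ) (k : ℤ),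
      (XX α β (-1) * ξ (k+1)).trace + (XX α β 0 * ξ k).trace + (XX α β 1 * ξ (k-1)).trace
      = β * ξ (k+1) 1 0 + Complex.I * (r : ℂ) * (ξ k 0 0 - ξ k 1 1)
        + conj β * ξ (k-1) 0 1 := by
    intro ξ k
    simp [XX, Matrix.trace_fin_two, Matrix.mul_apply, Fin.sum_univ_two, Matrix.vecMul,
      dotProduct, ← hrdef]
    ring
  have hK' : ∀ k : ℤ, β * H (k+1) 1 0 + Complex.I * (r : ℂ) * (H k 0 0 - H k 1 1)
      + conj β * H (k-1) 0 1 = 0 := fun k => by rw [← trform H k]; exact hK k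
  -- facts from the star condition
  have hH0 : (H 0)ᴴ = H 0 := by
    have h := hstar 0
    simpa [starSeq] using h
  have hHm1 : H (-1) = -(H 1)ᴴ := by
    have h := hstar (-1)
    simp [starSeq] at h
    linear_combination (norm := module) h
  have hm1e : H (-1) 0 1 = -conj (H 1 1 0) := by
    rw [hHm1]; simp [Matrix.conjTranspose_apply]
  -- the correction matrix
  set c : ℂ := β * H 1 1 0 with hc
  set s : ℂ := Complex.I * ((c.re / r : ℝ) : ℂ) with hsdef
  set S : Matrix (Fin 2) (Fin 2) ℂ := !![s, H 0 0 1; -(H 0 1 0), -s] with hSdef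
  have hs : Complex.I * (r : ℂ) * s = -(β * H 1 1 0 + conj β * conj (H 1 1 0)) / 2 := by
    have hcc : β * H 1 1 0 + conj β * conj (H 1 1 0) = 2 * ((c.re : ℝ) : ℂ) := by
      have h := Complex.add_conj (β * H 1 1 0)
      rw [_root_.map_mul] at h
      rw [hc, h]
      push_cast
      ring
    have e1 : ((c.re / r : ℝ) : ℂ) = (c.re : ℂ) / (r : ℂ) := by push_cast; ring
    rw [hcc, hsdef, e1]
    have h2 : ((c.re : ℂ) / (r : ℂ)) * (r : ℂ) = (c.re : ℂ) := div_mul_cancel₀ _ hrC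
    calc Complex.I * (r:ℂ) * (Complex.I * ((c.re:ℂ)/(r:ℂ)))
        = (Complex.I * Complex.I) * (((c.re:ℂ)/(r:ℂ)) * (r:ℂ)) := by ring
      _ = -(2 * ((c.re:ℝ):ℂ)) / 2 := by rw [Complex.I_mul_I, h2]; ring
  set P : ℤ → Matrix (Fin 2) (Fin 2) ℂ :=
    fun k => if k < 0 then 0 else if k = 0 then H 0 + S else (2:ℂ) • H k with hP
  have hPneg : ∀ k < 0, P k = 0 := fun k hk => by simp [hP, hk]
  have hP0 : P 0 = H 0 + S := by simp [hP]
  have hPpos : ∀ k : ℤ, 0 < k → P k = (2:ℂ) • H k := fun k hk => by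
    simp [hP, hk.ne', not_lt.mpr hk.le]
  refine ⟨P, ⟨?_, ?_⟩, ?_, hPneg, ?_, ?_⟩
  · -- summability
    have h2 : Summable (fun k : ℤ => 2 * ‖H k‖ + if k = 0 then ‖H 0 + S‖ else 0) :=
      (hH.1.mul_left 2).add (summable_of_ne_finset_zero (s := {0})
        (fun b hb => by simp at hb; simp [hb]))
    refine h2.of_nonneg_of_le (fun k => norm_nonneg _) (fun k => ?_)
    rcases lt_trichotomy k 0 with hk | hk | hk
    · simp [hPneg k hk, hk.ne]
    · subst hk
      simp [hP0]
    · rw [hPpos k hk, two_smul ℂ (H k)]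
      calc ‖H k + H k‖ ≤ ‖H k‖ + ‖H k‖ := norm_add_le _ _
        _ ≤ 2 * ‖H k‖ + if k = 0 then ‖H 0 + S‖ else 0 := by
            rw [if_neg hk.ne']
            linarith
  · -- tracelessness
    intro k
    rcases lt_trichotomy k 0 with hk | hk | hk
    · simp [hPneg k hk]
    · subst hk
      rw [hP0, Matrix.trace_add, hH.2, hSdef, Matrix.trace_fin_two]
      simp
    · rw [hPpos k hk, Matrix.trace_smul, hH.2, smul_zero]
  · -- Kcond
    intro k
    rw [trform]
    rcases lt_trichotomy k 0 with hk | hk | hk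
    · rcases eq_or_lt_of_le (by omega : k ≤ -1) with hk1 | hk1
      · subst hk1
        rw [hPneg (-1) (by norm_num), hPneg (-1-1) (by norm_num), show (-1:ℤ)+1 = 0 from rfl, hP0]
        simp [hSdef]
      · rw [hPneg (k+1) (by omega), hPneg k hk, hPneg (k-1) (by omega)]
        simp
    · subst hk
      rw [hPneg (0-1) (by norm_num), hP0, show (0:ℤ)+1 = 1 from rfl, hPpos 1 one_pos]
      have h0 := hK' 0
      rw [show (0:ℤ)+1 = 1 from rfl, show (0:ℤ)-1 = -1 from rfl, hm1e] at h0
      simp only [Matrix.smul_apply, Matrix.add_apply, smul_eq_mul, Matrix.zero_apply, hSdef]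
      rw [show (!![s, H 0 0 1; -H 0 1 0, -s] : Matrix (Fin 2) (Fin 2) ℂ) 0 0 = s from rfl,
        show (!![s, H 0 0 1; -H 0 1 0, -s] : Matrix (Fin 2) (Fin 2) ℂ) 1 1 = -s from rfl]
      linear_combination h0 + 2 * hs
    · rcases eq_or_lt_of_le (by omega : 1 ≤ k) with hk1 | hk1
      · subst hk1
        rw [show (1:ℤ)-1 = 0 from rfl, show (1:ℤ)+1 = 2 from rfl, hP0,
          hPpos 2 (by norm_num), hPpos 1 one_pos]
        have h1 := hK' 1
        rw [show (1:ℤ)-1 = 0 from rfl, show (1:ℤ)+1 = 2 from rfl] at h1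
        simp only [Matrix.smul_apply, Matrix.add_apply, smul_eq_mul, hSdef]
        rw [show (!![s, H 0 0 1; -H 0 1 0, -s] : Matrix (Fin 2) (Fin 2) ℂ) 0 1 = H 0 0 1 from rfl]
        linear_combination 2 * h1
      · rw [hPpos (k+1) (by omega), hPpos k (by omega), hPpos (k-1) (by omega)]
        have hk2 := hK' k
        simp only [Matrix.smul_apply, smul_eq_mul]
        linear_combination 2 * hk2
  · -- (2,1)-entry of P 0
    rw [hP0]
    simp [hSdef]
  · -- piH P = H
    funext k
    rcases lt_trichotomy k 0 with hk | hk | hk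
    · have hP' : P (-k) = (2:ℂ) • H (-k) := hPpos (-k) (by omega)
      have hst := hstar k
      rw [starSeq] at hst
      have hst' : ((-1:ℂ)^k • (H (-k))ᴴ) = H k := by
        linear_combination (norm := module) -hst
      simp only [piH, starSeq, hPneg k hk, hP', Matrix.conjTranspose_smul]
      rw [show star (2:ℂ) = 2 from by simp,
        smul_comm ((-1:ℂ)^k) (2:ℂ) ((H (-k))ᴴ), hst']
      module
    · subst hk
      have e01 : (starRingEnd ℂ) (H 0 1 0) = H 0 0 1 := by
        have h := congrFun (congrFun hH0 0) 1
        simpa [Matrix.conjTranspose_apply] using h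
      have e10 : (starRingEnd ℂ) (H 0 0 1) = H 0 1 0 := by
        have h := congrFun (congrFun hH0 1) 0
        simpa [Matrix.conjTranspose_apply] using h
      have hss : (starRingEnd ℂ) s = -s := by
        rw [hsdef, _root_.map_mul, Complex.conj_I, Complex.conj_ofReal]
        ring
      have hSH : Sᴴ = -S := by
        ext i j
        fin_cases i <;> fin_cases j <;>
          simp [hSdef, Matrix.conjTranspose_apply, hss, e01, e10]
      simp only [piH, starSeq, hP0, neg_zero, zpow_zero, one_smul,
        Matrix.conjTranspose_add, hH0, hSH]
      module
    · simp only [piH, starSeq, hPneg (-k) (by omega : -k < 0), hPpos k hk,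
        Matrix.conjTranspose_zero, smul_zero, neg_zero, sub_zero]
      module
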